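/- There exists C > 0 such that for all t > 0, the kernel K_t(y) = √(t/y) · J₀'(2√(ty)) satisfies ‖K_t‖_{L^∞((0,∞))} ≤ C·t and ‖K_t‖_{L²((0,∞))} ≤ C·t^{1/2}. -/

import Mathlib

open MeasureTheory Real

/-- The Bessel function of the first kind of order zero, via its integral
representation `J₀(z) = (1/π) ∫_0^π cos (z sin θ) dθ`. -/
noncomputable def besselJ0 (z : ℝ) : ℝ :=
  (1 / Real.pi) * ∫ θ in (0 : ℝ)..Real.pi, Real.cos (z * Real.sin θ)

/-- The kernel `K_t(y) = √(t/y) J₀'(2√(ty))`. -/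
noncomputable def Kker (t y : ℝ) : ℝ :=
  Real.sqrt (t / y) * deriv besselJ0 (2 * Real.sqrt (t * y))

noncomputable def J0d (z : ℝ) : ℝ :=
  (1 / Real.pi) * ∫ θ in (0 : ℝ)..Real.pi, -(Real.sin θ * Real.sin (z * Real.sin θ))

noncomputable def J0dd (z : ℝ) : ℝ :=
  (1 / Real.pi) * ∫ θ in (0 : ℝ)..Real.pi, -(Real.sin θ ^ 2 * Real.cos (z * Real.sin θ))

lemma aux_deriv1 (z : ℝ) :
    HasDerivAt (fun z => ∫ θ in (0:ℝ)..Real.pi, Real.cos (z * Real.sin θ))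
      (∫ θ in (0:ℝ)..Real.pi, -(Real.sin θ * Real.sin (z * Real.sin θ))) z := by
  have := intervalIntegral.hasDerivAt_integral_of_dominated_loc_of_deriv_le
    (F := fun z θ => Real.cos (z * Real.sin θ))
    (F' := fun z θ => -(Real.sin θ * Real.sin (z * Real.sin θ)))
    (x₀ := z) (a := (0:ℝ)) (b := Real.pi) (bound := fun _ => (1:ℝ)) (μ := volume)
    (Metric.ball_mem_nhds z one_pos) ?_ ?_ ?_ ?_ ?_ ?_
  · exact this.2
  · filter_upwards with x
    exact (Continuous.aestronglyMeasurable (by continuity)).restrict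
  · exact (Continuous.intervalIntegrable (by continuity) _ _)
  · exact (Continuous.aestronglyMeasurable (by continuity)).restrict
  · filter_upwards with θ _ x _
    rw [Real.norm_eq_abs, abs_neg, abs_mul]
    exact mul_le_one₀ (Real.abs_sin_le_one θ) (abs_nonneg _) (Real.abs_sin_le_one _)
  · exact (Continuous.intervalIntegrable (by continuity) _ _)
  · filter_upwards with θ _ x _
    have h : HasDerivAt (fun z : ℝ => z * Real.sin θ) (Real.sin θ) x := by
      simpa using (hasDerivAt_id x).mul_const (Real.sin θ)
    exact h.cos.congr_deriv (by ring)

lemma aux_deriv2 (z : ℝ) :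
    HasDerivAt (fun z => ∫ θ in (0:ℝ)..Real.pi, -(Real.sin θ * Real.sin (z * Real.sin θ)))
      (∫ θ in (0:ℝ)..Real.pi, -(Real.sin θ ^ 2 * Real.cos (z * Real.sin θ))) z := by
  have := intervalIntegral.hasDerivAt_integral_of_dominated_loc_of_deriv_le
    (F := fun z θ => -(Real.sin θ * Real.sin (z * Real.sin θ)))
    (F' := fun z θ => -(Real.sin θ ^ 2 * Real.cos (z * Real.sin θ)))
    (x₀ := z) (a := (0:ℝ)) (b := Real.pi) (bound := fun _ => (1:ℝ)) (μ := volume)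
    (Metric.ball_mem_nhds z one_pos) ?_ ?_ ?_ ?_ ?_ ?_
  · exact this.2
  · filter_upwards with x
    exact (Continuous.aestronglyMeasurable (by continuity)).restrict
  · exact (Continuous.intervalIntegrable (by continuity) _ _)
  · exact (Continuous.aestronglyMeasurable (by continuity)).restrict
  · filter_upwards with θ _ x _
    rw [Real.norm_eq_abs, abs_neg, abs_mul, abs_pow]
    calc |Real.sin θ| ^ 2 * |Real.cos (x * Real.sin θ)|
        ≤ 1 ^ 2 * 1 := by
          gcongr <;> [exact Real.abs_sin_le_one θ; exact Real.abs_cos_le_one _]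
      _ = 1 := by norm_num
  · exact (Continuous.intervalIntegrable (by continuity) _ _)
  · filter_upwards with θ _ x _
    have h : HasDerivAt (fun z : ℝ => z * Real.sin θ) (Real.sin θ) x := by
      simpa using (hasDerivAt_id x).mul_const (Real.sin θ)
    have := (h.sin).const_mul (Real.sin θ)
    have := this.neg
    exact this.congr_deriv (by ring)

lemma hasDerivAt_besselJ0 (z : ℝ) : HasDerivAt besselJ0 (J0d z) z := by
  unfold besselJ0 J0d
  exact (aux_deriv1 z).const_mul _

lemma hasDerivAt_J0d (z : ℝ) : HasDerivAt J0d (J0dd z) z := by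
  unfold J0d J0dd
  exact (aux_deriv2 z).const_mul _

lemma deriv_besselJ0 : deriv besselJ0 = J0d := by
  funext z; exact (hasDerivAt_besselJ0 z).deriv

lemma pi_bound_aux {I C : ℝ} (hC : 0 ≤ C) (h : |I| ≤ C * Real.pi) :
    |(1 / Real.pi) * I| ≤ C := by
  rw [abs_mul, abs_of_pos (by positivity : (0:ℝ) < 1 / Real.pi)]
  rw [div_mul_eq_mul_div, one_mul, div_le_iff₀ Real.pi_pos]
  linarith

lemma abs_besselJ0_le_one (z : ℝ) : |besselJ0 z| ≤ 1 := by
  apply pi_bound_aux zero_le_one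
  simpa [abs_of_nonneg Real.pi_pos.le] using
    intervalIntegral.norm_integral_le_of_norm_le_const
      (C := 1) (f := fun θ => Real.cos (z * Real.sin θ)) (a := 0) (b := Real.pi)
      (fun x _ => by rw [Real.norm_eq_abs]; exact Real.abs_cos_le_one _)

lemma abs_J0d_le_one (z : ℝ) : |J0d z| ≤ 1 := by
  apply pi_bound_aux zero_le_one
  simpa [abs_of_nonneg Real.pi_pos.le] using
    intervalIntegral.norm_integral_le_of_norm_le_const
      (C := 1) (f := fun θ => -(Real.sin θ * Real.sin (z * Real.sin θ))) (a := 0) (b := Real.pi)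
      (fun x _ => by
        rw [Real.norm_eq_abs, abs_neg, abs_mul]
        exact mul_le_one₀ (Real.abs_sin_le_one x) (abs_nonneg _) (Real.abs_sin_le_one _))

lemma abs_J0d_le_abs (z : ℝ) : |J0d z| ≤ |z| := by
  apply pi_bound_aux (abs_nonneg z)
  simpa [abs_of_nonneg Real.pi_pos.le] using
    intervalIntegral.norm_integral_le_of_norm_le_const
      (C := |z|) (f := fun θ => -(Real.sin θ * Real.sin (z * Real.sin θ))) (a := 0) (b := Real.pi)
      (fun x _ => by
        rw [Real.norm_eq_abs, abs_neg, abs_mul]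
        calc |Real.sin x| * |Real.sin (z * Real.sin x)| ≤ 1 * |z * Real.sin x| :=
              mul_le_mul (Real.abs_sin_le_one x) Real.abs_sin_le_abs (abs_nonneg _) zero_le_one
          _ = |z| * |Real.sin x| := by rw [one_mul, abs_mul]
          _ ≤ |z| * 1 := by gcongr; exact Real.abs_sin_le_one x
          _ = |z| := mul_one _)

lemma besselJ0_ode (z : ℝ) : z * J0dd z + J0d z + z * besselJ0 z = 0 := by
  have key : (∫ θ in (0:ℝ)..Real.pi,
      (z * -(Real.sin θ ^ 2 * Real.cos (z * Real.sin θ))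
        + -(Real.sin θ * Real.sin (z * Real.sin θ))
        + z * Real.cos (z * Real.sin θ))) = 0 := by
    have hd : ∀ θ ∈ Set.uIcc (0:ℝ) Real.pi, HasDerivAt
        (fun θ => Real.cos θ * Real.sin (z * Real.sin θ))
        (z * -(Real.sin θ ^ 2 * Real.cos (z * Real.sin θ))
          + -(Real.sin θ * Real.sin (z * Real.sin θ))
          + z * Real.cos (z * Real.sin θ)) θ := by
      intro θ _
      have h1 : HasDerivAt (fun θ : ℝ => z * Real.sin θ) (z * Real.cos θ) θ :=
        (Real.hasDerivAt_sin θ).const_mul z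
      have h2 : HasDerivAt (fun θ : ℝ => Real.sin (z * Real.sin θ))
          (Real.cos (z * Real.sin θ) * (z * Real.cos θ)) θ :=
        h1.sin
      have h3 := (Real.hasDerivAt_cos θ).mul h2
      refine h3.congr_deriv ?_
      linear_combination (z * Real.cos (z * Real.sin θ)) * (Real.sin_sq_add_cos_sq θ)
    rw [intervalIntegral.integral_eq_sub_of_hasDerivAt hd
      (Continuous.intervalIntegrable (by fun_prop) _ _)]
    simp
  have hint1 : IntervalIntegrable
      (fun θ => z * -(Real.sin θ ^ 2 * Real.cos (z * Real.sin θ))) volume 0 Real.pi :=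
    Continuous.intervalIntegrable (by fun_prop) _ _
  have hint2 : IntervalIntegrable
      (fun θ => -(Real.sin θ * Real.sin (z * Real.sin θ))) volume 0 Real.pi :=
    Continuous.intervalIntegrable (by fun_prop) _ _
  have hint3 : IntervalIntegrable
      (fun θ => z * Real.cos (z * Real.sin θ)) volume 0 Real.pi :=
    Continuous.intervalIntegrable (by fun_prop) _ _
  rw [intervalIntegral.integral_add (hint1.add hint2) hint3,
      intervalIntegral.integral_add hint1 hint2,
      intervalIntegral.integral_const_mul, intervalIntegral.integral_const_mul] at key
  unfold besselJ0 J0d J0dd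
  linear_combination (1 / Real.pi) * key

noncomputable def J0V (z : ℝ) : ℝ :=
  z * (besselJ0 z ^ 2 + J0d z ^ 2) + besselJ0 z * J0d z

noncomputable def J0H (z : ℝ) : ℝ := J0V z * Real.exp (2 / z)

lemma hasDerivAt_J0V (z : ℝ) (hz : z ≠ 0) :
    HasDerivAt J0V (-(besselJ0 z * J0d z) / z) z := by
  have hj := hasDerivAt_besselJ0 z
  have hd := hasDerivAt_J0d z
  have h : HasDerivAt J0V
      (1 * (besselJ0 z ^ 2 + J0d z ^ 2)
        + z * (2 * besselJ0 z ^ 1 * J0d z + 2 * J0d z ^ 1 * J0dd z)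
        + (J0d z * J0d z + besselJ0 z * J0dd z)) z :=
    ((hasDerivAt_id z).mul ((hj.pow 2).add (hd.pow 2))).add (hj.mul hd)
  convert h using 1
  have hode := besselJ0_ode z
  rw [div_eq_iff hz]
  linear_combination (-(2 * z * J0d z + besselJ0 z)) * hode

lemma hasDerivAt_J0H (z : ℝ) (hz : z ≠ 0) :
    HasDerivAt J0H
      (-(besselJ0 z * J0d z) / z * Real.exp (2 / z)
        + J0V z * (Real.exp (2 / z) * (-2 / z ^ 2))) z := by
  have h1 : HasDerivAt (fun z : ℝ => 2 / z) (-2 / z ^ 2) z := by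
    have := (hasDerivAt_inv hz).const_mul (2:ℝ)
    have hf : (fun z : ℝ => 2 / z) = fun z : ℝ => 2 * z⁻¹ := by
      funext w; rw [div_eq_mul_inv]
    rw [hf]
    exact this.congr_deriv (by ring)
  have h2 : HasDerivAt (fun z : ℝ => Real.exp (2 / z)) (Real.exp (2 / z) * (-2 / z ^ 2)) z :=
    (Real.hasDerivAt_exp (2 / z)).comp z h1
  exact (hasDerivAt_J0V z hz).mul h2

lemma J0H_antitone : AntitoneOn J0H (Set.Ici 1) := by
  apply antitoneOn_of_deriv_nonpos (convex_Ici 1)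
  · intro x hx
    exact (hasDerivAt_J0H x (by simp at hx; linarith)).continuousAt.continuousWithinAt
  · intro x hx
    rw [interior_Ici] at hx
    have : (1:ℝ) < x := hx
    exact (hasDerivAt_J0H x (by linarith)).differentiableAt.differentiableWithinAt
  · intro x hx
    rw [interior_Ici] at hx
    have hx1 : (1:ℝ) < x := hx
    have hx0 : x ≠ 0 := by linarith
    rw [(hasDerivAt_J0H x hx0).deriv]
    have hexp : 0 < Real.exp (2 / x) := Real.exp_pos _
    have hM : 0 ≤ besselJ0 x ^ 2 + J0d x ^ 2 := by positivity
    have key : -(besselJ0 x * J0d x) / x + J0V x * (-2 / x ^ 2) ≤ 0 := by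
      have heq : -(besselJ0 x * J0d x) / x + J0V x * (-2 / x ^ 2)
          = (-(2 * x * (besselJ0 x ^ 2 + J0d x ^ 2)
              + (2 + x) * (besselJ0 x * J0d x))) / x ^ 2 := by
        rw [J0V]; field_simp; ring
      rw [heq]
      apply div_nonpos_of_nonpos_of_nonneg _ (by positivity)
      have h1 : 0 ≤ (2 + x) / 2 * (besselJ0 x + J0d x) ^ 2 :=
        mul_nonneg (by linarith) (sq_nonneg _)
      have h2 : 0 ≤ (3 * x / 2 - 1) * (besselJ0 x ^ 2 + J0d x ^ 2) :=
        mul_nonneg (by linarith) hM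
      nlinarith [h1, h2]
    calc -(besselJ0 x * J0d x) / x * Real.exp (2 / x)
          + J0V x * (Real.exp (2 / x) * (-2 / x ^ 2))
        = (-(besselJ0 x * J0d x) / x + J0V x * (-2 / x ^ 2)) * Real.exp (2 / x) := by ring
      _ ≤ 0 := mul_nonpos_of_nonpos_of_nonneg key hexp.le

lemma J0d_sq_decay {z : ℝ} (hz : 1 ≤ z) : J0d z ^ 2 ≤ 48 / z := by
  have hz0 : (0:ℝ) < z := by linarith
  have e1 : besselJ0 1 ^ 2 ≤ 1 := by
    have := abs_besselJ0_le_one 1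
    nlinarith [sq_abs (besselJ0 1), abs_nonneg (besselJ0 1)]
  have e2 : J0d 1 ^ 2 ≤ 1 := by
    have := abs_J0d_le_one 1
    nlinarith [sq_abs (J0d 1), abs_nonneg (J0d 1)]
  have hV1 : J0V 1 ≤ 3 := by
    rw [J0V]; nlinarith [e1, e2, sq_nonneg (besselJ0 1 - J0d 1)]
  have hexp2 : Real.exp (2 / 1) ≤ 8 := by
    rw [show (2:ℝ)/1 = 1 + 1 by norm_num, Real.exp_add]
    nlinarith [Real.exp_one_lt_d9, Real.exp_pos 1]
  have hV10 : 0 ≤ J0V 1 := by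
    rw [J0V]; nlinarith [sq_nonneg (besselJ0 1 + J0d 1), e1, e2]
  have hH1 : J0H 1 ≤ 24 := by
    rw [J0H]
    calc J0V 1 * Real.exp (2 / 1) ≤ 3 * 8 :=
          mul_le_mul hV1 hexp2 (Real.exp_pos _).le (by norm_num)
      _ = 24 := by norm_num
  have hHz : J0H z ≤ J0H 1 := J0H_antitone (Set.self_mem_Ici) hz hz
  have hVz0 : 0 ≤ J0V z := by
    rw [J0V]
    nlinarith [sq_nonneg (besselJ0 z + J0d z), sq_nonneg (besselJ0 z - J0d z),
      mul_nonneg (by positivity : (0:ℝ) ≤ besselJ0 z ^ 2 + J0d z ^ 2) (by linarith : (0:ℝ) ≤ z - 1)]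
  have hexpz : 1 ≤ Real.exp (2 / z) := Real.one_le_exp (by positivity)
  have hVz : J0V z ≤ 24 := by
    calc J0V z = J0V z * 1 := (mul_one _).symm
      _ ≤ J0V z * Real.exp (2 / z) := by exact mul_le_mul_of_nonneg_left hexpz hVz0
      _ = J0H z := rfl
      _ ≤ 24 := le_trans hHz hH1
  have h24 : (besselJ0 z ^ 2 + J0d z ^ 2) * (z - 1/2) ≤ 24 := by
    have : (besselJ0 z ^ 2 + J0d z ^ 2) * (z - 1/2) ≤ J0V z := by
      rw [J0V]; nlinarith [sq_nonneg (besselJ0 z + J0d z)]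
    linarith
  rw [le_div_iff₀ hz0]
  nlinarith [h24, mul_nonneg (sq_nonneg (besselJ0 z)) (by linarith : (0:ℝ) ≤ 2*z - 1),
    mul_nonneg (sq_nonneg (J0d z)) (by linarith : (0:ℝ) ≤ z - 1)]

lemma Kker_sq (t y : ℝ) (ht : 0 < t) (hy : 0 < y) :
    Kker t y ^ 2 = t / y * J0d (2 * Real.sqrt (t * y)) ^ 2 := by
  rw [Kker, deriv_besselJ0, mul_pow, Real.sq_sqrt (by positivity)]

lemma Kker_abs_le (t y : ℝ) (ht : 0 < t) (hy : 0 < y) : |Kker t y| ≤ 2 * t := by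
  rw [Kker, deriv_besselJ0, abs_mul, abs_of_nonneg (Real.sqrt_nonneg _)]
  have h1 : |J0d (2 * Real.sqrt (t * y))| ≤ 2 * Real.sqrt (t * y) := by
    refine le_trans (abs_J0d_le_abs _) ?_
    rw [abs_of_nonneg (by positivity)]
  calc Real.sqrt (t / y) * |J0d (2 * Real.sqrt (t * y))|
      ≤ Real.sqrt (t / y) * (2 * Real.sqrt (t * y)) :=
        mul_le_mul_of_nonneg_left h1 (Real.sqrt_nonneg _)
    _ = 2 * (Real.sqrt (t / y) * Real.sqrt (t * y)) := by ring
    _ = 2 * t := by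
        rw [← Real.sqrt_mul (by positivity) (t * y),
          show t / y * (t * y) = t ^ 2 by field_simp,
          Real.sqrt_sq ht.le]

theorem Kt_bounds :
    ∃ C : ℝ, 0 < C ∧ ∀ t : ℝ, 0 < t →
      (∀ y : ℝ, 0 < y → |Kker t y| ≤ C * t) ∧
      (∫ y in Set.Ioi (0 : ℝ), (Kker t y) ^ 2) ^ (1 / 2 : ℝ) ≤ C * t ^ (1 / 2 : ℝ) := by
  refine ⟨100, by norm_num, fun t ht => ⟨fun y hy => le_trans (Kker_abs_le t y ht hy)
    (by nlinarith), ?_⟩⟩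
  set y0 : ℝ := 1 / (4 * t) with hy0_def
  have hy0 : 0 < y0 := by positivity
  set g : ℝ → ℝ := fun y => if y ≤ y0 then 4 * t ^ 2 else 24 * Real.sqrt t / (y * Real.sqrt y)
    with hg_def
  -- pointwise bound on Ioi 0
  have hle : ∀ y ∈ Set.Ioi (0:ℝ), Kker t y ^ 2 ≤ g y := by
    intro y hy
    have hy : 0 < y := hy
    rw [Kker_sq t y ht hy, hg_def]
    by_cases hcase : y ≤ y0
    · simp only [hcase, if_true]
      have h1 : J0d (2 * Real.sqrt (t * y)) ^ 2 ≤ (2 * Real.sqrt (t * y)) ^ 2 := by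
        have := abs_J0d_le_abs (2 * Real.sqrt (t * y))
        nlinarith [sq_abs (J0d (2 * Real.sqrt (t * y))), sq_abs (2 * Real.sqrt (t * y)),
          abs_nonneg (J0d (2 * Real.sqrt (t * y))), abs_nonneg (2 * Real.sqrt (t * y))]
      have h2 : (2 * Real.sqrt (t * y)) ^ 2 = 4 * (t * y) := by
        rw [mul_pow, Real.sq_sqrt (by positivity)]; ring
      calc t / y * J0d (2 * Real.sqrt (t * y)) ^ 2 ≤ t / y * (4 * (t * y)) := by
            rw [← h2]; exact mul_le_mul_of_nonneg_left h1 (by positivity)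
        _ = 4 * t ^ 2 := by field_simp
    · simp only [hcase, if_false]
      push_neg at hcase
      have hty : 1 / 4 ≤ t * y := by
        have h := (div_lt_iff₀ (by positivity : (0:ℝ) < 4 * t)).mp hcase
        nlinarith
      have hz : 1 ≤ 2 * Real.sqrt (t * y) := by
        have : (1:ℝ)/2 ≤ Real.sqrt (t * y) := by
          rw [show (1:ℝ)/2 = Real.sqrt (1/4) by
            rw [show (1:ℝ)/4 = (1/2)^2 by norm_num, Real.sqrt_sq (by norm_num)]]
          exact Real.sqrt_le_sqrt hty
        linarith
      have hdec := J0d_sq_decay hz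
      have hsq : 0 < Real.sqrt (t * y) := by positivity
      have hsy : 0 < Real.sqrt y := Real.sqrt_pos.2 hy
      have hst : 0 < Real.sqrt t := Real.sqrt_pos.2 ht
      calc t / y * J0d (2 * Real.sqrt (t * y)) ^ 2
          ≤ t / y * (48 / (2 * Real.sqrt (t * y))) :=
            mul_le_mul_of_nonneg_left hdec (by positivity)
        _ = 24 * Real.sqrt t / (y * Real.sqrt y) := by
            rw [Real.sqrt_mul ht.le]
            rw [div_mul_div_comm]
            rw [div_eq_div_iff (by positivity) (by positivity)]
            have h1 : Real.sqrt t ^ 2 = t := Real.sq_sqrt ht.le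
            linear_combination (-(48 * y * Real.sqrt y)) * h1
  -- piecewise facts
  have hg_Ioc_eq : Set.EqOn (fun _ : ℝ => 4 * t ^ 2) g (Set.Ioc 0 y0) := fun y hy => by
    simp only [hg_def, hy.2, if_true]
  have h32 : ∀ y : ℝ, 0 < y → (y : ℝ) ^ (-(3/2) : ℝ) = 1 / (y * Real.sqrt y) := by
    intro y hy
    rw [show (-(3/2) : ℝ) = -((1:ℝ) + 1/2) by norm_num, Real.rpow_neg hy.le,
      Real.rpow_add hy, Real.rpow_one, ← Real.sqrt_eq_rpow, one_div]
  have hg_Ioi_eq : Set.EqOn (fun y : ℝ => 24 * Real.sqrt t * y ^ (-(3/2) : ℝ)) g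
      (Set.Ioi y0) := fun y hy => by
    have hy' : 0 < y := lt_trans hy0 hy
    simp only [hg_def, not_le.2 (Set.mem_Ioi.1 hy), if_false]
    rw [h32 y hy']
    field_simp
  have hgIoc : IntegrableOn g (Set.Ioc 0 y0) volume :=
    (integrableOn_const measure_Ioc_lt_top.ne).congr_fun hg_Ioc_eq measurableSet_Ioc
  have hrpow : IntegrableOn (fun y : ℝ => y ^ (-(3/2) : ℝ)) (Set.Ioi y0) volume :=
    integrableOn_Ioi_rpow_of_lt (by norm_num) hy0
  have hgIoi : IntegrableOn g (Set.Ioi y0) volume :=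
    IntegrableOn.congr_fun (hrpow.const_mul (24 * Real.sqrt t)) hg_Ioi_eq measurableSet_Ioi
  have hsplit : Set.Ioi (0:ℝ) = Set.Ioc 0 y0 ∪ Set.Ioi y0 :=
    (Set.Ioc_union_Ioi_eq_Ioi hy0.le).symm
  have hg_int : IntegrableOn g (Set.Ioi (0:ℝ)) volume := by
    rw [hsplit]; exact hgIoc.union hgIoi
  -- compare the integrals
  have hint_le : (∫ y in Set.Ioi (0:ℝ), Kker t y ^ 2) ≤ ∫ y in Set.Ioi (0:ℝ), g y :=
    integral_mono_of_nonneg (Filter.Eventually.of_forall fun y => sq_nonneg _) hg_int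
      ((ae_restrict_iff' measurableSet_Ioi).2 (Filter.Eventually.of_forall hle))
  -- compute ∫ g
  have hIoc_val : (∫ y in Set.Ioc (0:ℝ) y0, g y) = t := by
    rw [← setIntegral_congr_fun measurableSet_Ioc hg_Ioc_eq, setIntegral_const,
      Real.volume_real_Ioc_of_le hy0.le, smul_eq_mul]
    rw [hy0_def]; field_simp; ring
  have hIoi_val : (∫ y in Set.Ioi y0, g y) = 96 * t := by
    rw [← setIntegral_congr_fun measurableSet_Ioi hg_Ioi_eq, integral_const_mul,
      integral_Ioi_rpow_of_lt (by norm_num) hy0]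
    have hy0v : y0 ^ ((-(3/2) : ℝ) + 1) = Real.sqrt (4 * t) := by
      rw [show ((-(3/2) : ℝ) + 1) = -(1/2 : ℝ) by norm_num, Real.rpow_neg hy0.le,
        ← Real.sqrt_eq_rpow, hy0_def, one_div, Real.sqrt_inv, inv_inv]
    rw [hy0v]
    have h4t : Real.sqrt (4 * t) = 2 * Real.sqrt t := by
      rw [show (4:ℝ) * t = 2 ^ 2 * t by norm_num, Real.sqrt_mul (by positivity),
        Real.sqrt_sq (by norm_num)]
    rw [h4t]
    have hst : 0 < Real.sqrt t := Real.sqrt_pos.2 ht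
    have hst2 : Real.sqrt t ^ 2 = t := Real.sq_sqrt ht.le
    field_simp
    linear_combination (-96 : ℝ) * hst2
  have hg_val : (∫ y in Set.Ioi (0:ℝ), g y) = 97 * t := by
    rw [hsplit, setIntegral_union (Set.Ioc_disjoint_Ioi le_rfl) measurableSet_Ioi hgIoc hgIoi,
      hIoc_val, hIoi_val]
    ring
  -- conclude
  have h0 : 0 ≤ ∫ y in Set.Ioi (0:ℝ), Kker t y ^ 2 :=
    setIntegral_nonneg measurableSet_Ioi fun y _ => sq_nonneg _
  calc (∫ y in Set.Ioi (0:ℝ), Kker t y ^ 2) ^ (1/2 : ℝ)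
      ≤ (97 * t) ^ (1/2 : ℝ) := by
        apply Real.rpow_le_rpow h0 _ (by norm_num)
        rw [← hg_val] at *
        linarith [hint_le]
    _ = (97 : ℝ) ^ (1/2 : ℝ) * t ^ (1/2 : ℝ) := Real.mul_rpow (by norm_num) ht.le
    _ ≤ 100 * t ^ (1/2 : ℝ) := by
        apply mul_le_mul_of_nonneg_right _ (Real.rpow_nonneg ht.le _)
        rw [← Real.sqrt_eq_rpow]
        nlinarith [Real.sq_sqrt (by norm_num : (0:ℝ) ≤ 97), Real.sqrt_nonneg 97]
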